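/- Let E be a nonzero finite-dimensional complex inner product space, T : E → E a self-adjoint linear map, and ε a real number that is not an eigenvalue of T, so that T − ε·id is invertible. Let μ be an eigenvalue of T such that |μ − ε| < |ν − ε| for every eigenvalue ν of T with ν ≠ μ, and let P denote the orthogonal projection of E onto the eigenspace ker(T − μ·id). Then for every ψ ∈ E, the sequence (μ − ε)^n • ((T − ε·id)⁻¹)^n ψ converges to P ψ as n → ∞. -/

import Mathlib

open Filter Module

/-- Convergence of inverse iteration: if `ε` is not an eigenvalue of the self-adjoint
operator `T` (so `T − ε·id` is invertible) and `μ` is the eigenvalue of `T` closest to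
`ε`, then `(μ − ε)ⁿ (T − ε·id)⁻ⁿ ψ → P ψ`, where `P` is the orthogonal projection onto
the `μ`-eigenspace. -/
theorem inverse_iteration_tendsto
    {E : Type*} [NormedAddCommGroup E] [InnerProductSpace ℂ E]
    [FiniteDimensional ℂ E] [Nontrivial E]
    (T : Module.End ℂ E) (hT : LinearMap.IsSymmetric T)
    (ε : ℝ) (hε : ¬ Module.End.HasEigenvalue T (ε : ℂ))
    (μ : ℂ) (hμ : Module.End.HasEigenvalue T μ)
    (hclose : ∀ ν : ℂ, Module.End.HasEigenvalue T ν → ν ≠ μ →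
      ‖μ - (ε : ℂ)‖ < ‖ν - (ε : ℂ)‖)
    (ψ : E) :
    Filter.Tendsto
      (fun n : ℕ => (μ - (ε : ℂ)) ^ n •
        ((Ring.inverse (T - (ε : ℂ) • (1 : Module.End ℂ E)) ^ n) ψ))
      Filter.atTop
      (nhds (((Module.End.eigenspace T μ).orthogonalProjectionOnto ψ : E))) := by
  set S : Module.End ℂ E := T - (ε : ℂ) • (1 : Module.End ℂ E) with hS
  have hspec : (ε : ℂ) ∉ spectrum ℂ T := fun h => hε (Module.End.HasEigenvalue.of_mem_spectrum h)
  have hunit : IsUnit S := by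
    rw [spectrum.notMem_iff] at hspec
    have : IsUnit (-(algebraMap ℂ (Module.End ℂ E) (ε : ℂ) - T)) := hspec.neg
    simpa [hS, Module.algebraMap_end_eq_smul_id, neg_sub, Module.End.one_eq_id] using this
  obtain ⟨u, hu⟩ := hunit
  have hinv : Ring.inverse S = (↑u⁻¹ : Module.End ℂ E) := by
    rw [← hu, Ring.inverse_unit]
  -- eigenbasis
  set b := hT.eigenvectorBasis rfl with hb
  set lam := hT.eigenvalues (rfl : finrank ℂ E = finrank ℂ E) with hlam
  have heig : ∀ i, T (b i) = (lam i : ℂ) • b i := hT.apply_eigenvectorBasis rfl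
  have hev : ∀ i, Module.End.HasEigenvalue T ((lam i : ℝ) : ℂ) :=
    hT.hasEigenvalue_eigenvalues rfl
  have hne : ∀ i, ((lam i : ℝ) : ℂ) - (ε : ℂ) ≠ 0 := by
    intro i h
    rw [sub_eq_zero] at h
    exact hε (h ▸ hev i)
  have hμε : μ - (ε : ℂ) ≠ 0 := by
    intro h
    rw [sub_eq_zero] at h
    exact hε (h ▸ hμ)
  -- action of inverse on basis vectors
  have hSb : ∀ i, S (b i) = (((lam i : ℝ) : ℂ) - ε) • b i := by
    intro i
    simp [hS, LinearMap.sub_apply, heig i, sub_smul]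
  have hinvb : ∀ i, (↑u⁻¹ : Module.End ℂ E) (b i) = (((lam i : ℝ) : ℂ) - ε)⁻¹ • b i := by
    intro i
    have h1 : (↑u⁻¹ : Module.End ℂ E) (S (b i)) = b i := by
      rw [← hu, ← Module.End.mul_apply, u.inv_mul, Module.End.one_apply]
    rw [hSb i, map_smul] at h1
    have h2 := congrArg (fun x => ((((lam i : ℝ) : ℂ)) - ε)⁻¹ • x) h1
    simpa [smul_smul, inv_mul_cancel₀ (hne i)] using h2
  have hinvnb : ∀ (n : ℕ) (i), ((Ring.inverse S) ^ n) (b i)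
      = ((((lam i : ℝ) : ℂ) - ε)⁻¹) ^ n • b i := by
    intro n i
    induction n with
    | zero => simp
    | succ n ih =>
      rw [pow_succ, Module.End.mul_apply, hinv, hinvb i, map_smul, ← hinv, ih, smul_smul,
        ← pow_succ']
  -- rewrite the sequence as a finite sum
  have hseq : ∀ n : ℕ, (μ - (ε : ℂ)) ^ n • ((Ring.inverse S ^ n) ψ)
      = ∑ i, ((μ - (ε : ℂ)) / (((lam i : ℝ) : ℂ) - ε)) ^ n • ((inner ℂ (b i) ψ : ℂ) • b i) := by
    intro n
    conv_lhs => rw [← b.sum_repr' ψ]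
    rw [map_sum, Finset.smul_sum]
    refine Finset.sum_congr rfl fun i _ => ?_
    rw [map_smul, hinvnb n i, smul_smul, smul_smul, smul_smul]
    congr 1
    rw [div_pow]
    field_simp
    ring
  simp only [hseq]
  -- limit of each term
  have hlim : Filter.Tendsto
      (fun n : ℕ => ∑ i, ((μ - (ε : ℂ)) / (((lam i : ℝ) : ℂ) - ε)) ^ n • ((inner ℂ (b i) ψ : ℂ) • b i))
      Filter.atTop
      (nhds (∑ i, if ((lam i : ℝ) : ℂ) = μ then (inner ℂ (b i) ψ : ℂ) • b i else 0)) := by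
    refine tendsto_finset_sum _ fun i _ => ?_
    by_cases h : ((lam i : ℝ) : ℂ) = μ
    · simp only [if_pos h, h, div_self hμε, one_pow, one_smul]
      exact tendsto_const_nhds
    · simp only [if_neg h]
      have hr : ‖(μ - (ε : ℂ)) / (((lam i : ℝ) : ℂ) - ε)‖ < 1 := by
        rw [norm_div, div_lt_one (norm_pos_iff.mpr (hne i))]
        exact hclose _ (hev i) h
      have := (tendsto_pow_atTop_nhds_zero_of_norm_lt_one hr).smul_const ((inner ℂ (b i) ψ : ℂ) • b i)
      simpa using this
  convert hlim using 2
  -- identify the limit with the projection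
  conv_lhs => rw [← b.sum_repr' ψ]
  rw [map_sum, Submodule.coe_sum]
  refine Finset.sum_congr rfl fun i _ => ?_
  by_cases h : ((lam i : ℝ) : ℂ) = μ
  · rw [if_pos h]
    have hmem : b i ∈ Module.End.eigenspace T μ := by
      rw [Module.End.mem_eigenspace_iff, heig i, h]
    have hproj : (((Module.End.eigenspace T μ).orthogonalProjectionOnto (b i)) : E) = b i :=
      Submodule.starProjection_eq_self_iff.mpr hmem
    rw [map_smul, Submodule.coe_smul, hproj]
  · rw [if_neg h, map_smul, Submodule.coe_smul]
    have hmem : b i ∈ (Module.End.eigenspace T μ)ᗮ := by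
      intro v hv
      exact hT.orthogonalFamily_eigenspaces (Ne.symm h) ⟨v, hv⟩
        ⟨b i, Module.End.mem_eigenspace_iff.mpr (heig i)⟩
    rw [Submodule.orthogonalProjectionOnto_apply_of_mem_orthogonal hmem]
    simp
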